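/- Let m, k ≥ 1, γ ∈ ℝ, let H be an m×m real matrix with I_m − H invertible, let F be an m×k real matrix, and let Q : ℕ → Matrix (Fin m) (Fin m) ℝ and F' : ℕ → Matrix (Fin m) (Fin k) ℝ be sequences satisfying (I_m − Q(t))·(I_m − H)^{−1}·F = γ·F'(t) for every t. Define Γ(T) := γ·F'(T) + γ·Σ_{j=1}^{T} ( Q(T)·Q(T−1)···Q(j) )·F'(j−1). Then Γ(T) = ( I_m − Q(T)·Q(T−1)···Q(0) )·(I_m − H)^{−1}·F for every T ∈ ℕ. Consequently, if the left products Q(T)·Q(T−1)···Q(0) converge entrywise to the zero matrix as T → ∞, then Γ(T) converges entrywise to (I_m − H)^{−1}·F. -/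

import Mathlib

open Filter Topology Matrix

/-- Left product `Q(a+n-1) * ⋯ * Q(a+1) * Q(a)` of a matrix sequence over the `n` times
`a, a+1, …, a+n-1`; `blockProd Q a 0 = 1`. In particular `blockProd Q j (T - j + 1)` is
`Q(T) ⋯ Q(j)` for `j ≤ T`, and `blockProd Q 0 (T + 1)` is `Q(T) ⋯ Q(0)`. -/
noncomputable def blockProd {m : ℕ} (Q : ℕ → Matrix (Fin m) (Fin m) ℝ) (a : ℕ) :
    ℕ → Matrix (Fin m) (Fin m) ℝ
  | 0 => 1
  | n + 1 => Q (a + n) * blockProd Q a n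

/-- Telescoping identity (29) and limit (15): if `(I - Q(t))(I - H)⁻¹ F = γ F'(t)` for all `t`
and `Γ(T) = γ F'(T) + γ ∑_{j=1}^{T} (Q(T) ⋯ Q(j)) F'(j-1)`, then
`Γ(T) = (I - Q(T) ⋯ Q(0)) (I - H)⁻¹ F` for every `T`; consequently, if the left products
`Q(T) ⋯ Q(0)` converge entrywise to the zero matrix, then `Γ(T)` converges entrywise to
`(I - H)⁻¹ F`. -/
theorem stmt7 {m k : ℕ} (hm : 1 ≤ m) (hk : 1 ≤ k) (γ : ℝ)
    (H : Matrix (Fin m) (Fin m) ℝ) (hinv : IsUnit (1 - H))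
    (F : Matrix (Fin m) (Fin k) ℝ)
    (Q : ℕ → Matrix (Fin m) (Fin m) ℝ)
    (F' : ℕ → Matrix (Fin m) (Fin k) ℝ)
    (hrel : ∀ t, (1 - Q t) * (1 - H)⁻¹ * F = γ • F' t)
    (Γ : ℕ → Matrix (Fin m) (Fin k) ℝ)
    (hΓ : ∀ T, Γ T = γ • F' T +
      γ • ∑ j ∈ Finset.Icc 1 T, blockProd Q j (T - j + 1) * F' (j - 1)) :
    (∀ T, Γ T = (1 - blockProd Q 0 (T + 1)) * (1 - H)⁻¹ * F) ∧
      ((∀ i j, Tendsto (fun T => blockProd Q 0 (T + 1) i j) atTop (𝓝 0)) →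
        ∀ i j, Tendsto (fun T => Γ T i j) atTop (𝓝 (((1 - H)⁻¹ * F) i j))) := by
  set M := (1 - H)⁻¹ * F with hM
  have hrel' : ∀ t, γ • F' t = M - Q t * M := by
    intro t
    rw [← hrel t, Matrix.sub_mul, Matrix.sub_mul, Matrix.one_mul, Matrix.mul_assoc]
  have key : ∀ T, Γ T = M - blockProd Q 0 (T + 1) * M := by
    intro T
    induction T with
    | zero =>
      simp [hΓ 0, blockProd, hrel' 0]
    | succ T ih =>
      have hterm : blockProd Q (T + 1) (T + 1 - (T + 1) + 1) * F' (T + 1 - 1)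
          = Q (T + 1) * F' T := by
        simp [blockProd]
      have hsum : ∀ j ∈ Finset.Icc 1 T,
          blockProd Q j (T + 1 - j + 1) * F' (j - 1)
            = Q (T + 1) * (blockProd Q j (T - j + 1) * F' (j - 1)) := by
        intro j hj
        obtain ⟨hj1, hj2⟩ := Finset.mem_Icc.mp hj
        have h1 : T + 1 - j + 1 = (T - j + 1) + 1 := by omega
        have h2 : j + (T - j + 1) = T + 1 := by omega
        rw [h1]
        show Q (j + (T - j + 1)) * blockProd Q j (T - j + 1) * F' (j - 1) = _
        rw [h2, Matrix.mul_assoc]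
      have hΓsucc : Γ (T + 1) = γ • F' (T + 1) + Q (T + 1) * Γ T := by
        rw [hΓ (T + 1), Finset.sum_Icc_succ_top (by omega : 1 ≤ T + 1),
          Finset.sum_congr rfl hsum, hterm, hΓ T, Matrix.mul_add,
          Matrix.mul_smul, Matrix.mul_smul, Matrix.mul_sum, smul_add]
        abel
      rw [hΓsucc, ih, hrel' (T + 1)]
      have hP : blockProd Q 0 (T + 1 + 1) = Q (T + 1) * blockProd Q 0 (T + 1) := by
        show Q (0 + (T + 1)) * blockProd Q 0 (T + 1) = _
        rw [zero_add]
      rw [hP, Matrix.mul_sub, Matrix.mul_assoc]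
      abel
  constructor
  · intro T
    rw [key T, hM, Matrix.sub_mul, Matrix.sub_mul, Matrix.one_mul, Matrix.mul_assoc]
  · intro hP i j
    have h1 : ∀ T, Γ T i j
        = M i j - ∑ l, blockProd Q 0 (T + 1) i l * M l j := by
      intro T
      rw [key T]
      simp [Matrix.sub_apply, Matrix.mul_apply]
    have h2 : Tendsto (fun T => ∑ l, blockProd Q 0 (T + 1) i l * M l j)
        atTop (𝓝 0) := by
      have := tendsto_finset_sum Finset.univ
        (fun l (_ : l ∈ Finset.univ) => ((hP i l).mul_const (M l j)))
      simpa using this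
    simp only [h1]
    simpa using tendsto_const_nhds.sub h2
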